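/- The map σ from the complete lattice Cll(X) of local clones on a countably infinite set X into the lattice of partial clones of finite operations on X, which sends each local clone C to the set of all restrictions of operations of C to finite subsets of the appropriate powers of X, is injective and preserves arbitrary (including infinite) joins. -/

import Mathlib

/-- A finitary operation on `X`: an `(n+1)`-ary function `X^(n+1) → X` (arities are ≥ 1). -/
abbrev FinOp (X : Type) := Σ n : ℕ, (Fin (n + 1) → X) → X

/-- A finitary relation on `X`: an `(m+1)`-ary relation `ρ ⊆ X^(m+1)` (arities are ≥ 1). -/
abbrev FinRel (X : Type) := Σ m : ℕ, Set (Fin (m + 1) → X)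

variable {X : Type}

/-- `C` is a clone: it contains all projections and is closed under composition. -/
def IsClone (C : Set (FinOp X)) : Prop :=
  (∀ (n : ℕ) (k : Fin (n + 1)), (⟨n, fun x => x k⟩ : FinOp X) ∈ C) ∧
  (∀ (n m : ℕ) (f : (Fin (n + 1) → X) → X) (g : Fin (n + 1) → (Fin (m + 1) → X) → X),
    (⟨n, f⟩ : FinOp X) ∈ C → (∀ i, (⟨m, g i⟩ : FinOp X) ∈ C) →
    (⟨m, fun x => f fun i => g i x⟩ : FinOp X) ∈ C)

/-- `C` is a local clone: a clone each of whose `n`-ary fragments is closed in the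
product topology on `X^(X^n)`, where `X` carries the discrete topology. -/
def IsLocalClone (C : Set (FinOp X)) : Prop :=
  IsClone C ∧
  ∀ n : ℕ,
    letI : TopologicalSpace X := ⊥
    IsClosed {f : (Fin (n + 1) → X) → X | (⟨n, f⟩ : FinOp X) ∈ C}

/-- The smallest local clone containing `F` (the local clone generated by `F`). -/
def cllClosure (F : Set (FinOp X)) : Set (FinOp X) :=
  ⋂₀ {C : Set (FinOp X) | IsLocalClone C ∧ F ⊆ C}

/-- `f` preserves the relation `ρ`. -/
def Preserves {n m : ℕ} (f : (Fin (n + 1) → X) → X) (ρ : Set (Fin (m + 1) → X)) : Prop :=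
  ∀ r : Fin (n + 1) → Fin (m + 1) → X, (∀ i, r i ∈ ρ) → (fun j => f fun i => r i j) ∈ ρ

/-- `Pol R`: all finitary operations preserving every relation in `R`. -/
def Polymorphisms (R : Set (FinRel X)) : Set (FinOp X) :=
  {f | ∀ ρ ∈ R, Preserves f.2 ρ.2}

/-- `Inv F`: all finitary relations invariant under every operation in `F`. -/
def Invariants (F : Set (FinOp X)) : Set (FinRel X) :=
  {ρ | ∀ f ∈ F, Preserves f.2 ρ.2}

/-- The clone of projections. -/
def projClone (X : Type) : Set (FinOp X) :=
  {f | ∃ k : Fin (f.1 + 1), f.2 = fun x => x k}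

/-- A partial finitary operation on `X`: a partial function `X^(n+1) →. X`. -/
abbrev PartFinOp (X : Type) := Σ n : ℕ, (Fin (n + 1) → X) →. X

/-- Combine a tuple of partial values into a partial tuple. -/
def partPi {X : Type} {k : ℕ} (p : Fin k → Part X) : Part (Fin k → X) :=
  ⟨∀ i, (p i).Dom, fun h i => (p i).get (h i)⟩

/-- A partial clone of finite operations: a set of partial operations with finite domain,
containing all restrictions of projections to finite domains, closed under composition. -/
def IsPartialClone {X : Type} (P : Set (PartFinOp X)) : Prop :=
  (∀ p ∈ P, {x | (Sigma.snd p x).Dom}.Finite) ∧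
  (∀ (n : ℕ) (k : Fin (n + 1)) (D : Set (Fin (n + 1) → X)), D.Finite →
    (⟨n, fun x => ⟨x ∈ D, fun _ => x k⟩⟩ : PartFinOp X) ∈ P) ∧
  (∀ (n m : ℕ) (f : (Fin (n + 1) → X) →. X) (g : Fin (n + 1) → (Fin (m + 1) → X) →. X),
    (⟨n, f⟩ : PartFinOp X) ∈ P → (∀ i, (⟨m, g i⟩ : PartFinOp X) ∈ P) →
    (⟨m, fun x => (partPi fun i => g i x).bind f⟩ : PartFinOp X) ∈ P)

/-- The partial clone of finite operations generated by `F`. -/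
def partialCloneClosure {X : Type} (F : Set (PartFinOp X)) : Set (PartFinOp X) :=
  ⋂₀ {P : Set (PartFinOp X) | IsPartialClone P ∧ F ⊆ P}

/-- The restriction of a total operation to a domain `D`. -/
def restrictOp {X : Type} {n : ℕ} (f : (Fin (n + 1) → X) → X)
    (D : Set (Fin (n + 1) → X)) : (Fin (n + 1) → X) →. X :=
  fun x => ⟨x ∈ D, fun _ => f x⟩

/-- The set of all restrictions of operations of `C` to finite domains. -/
def partRestrictions {X : Type} (C : Set (FinOp X)) : Set (PartFinOp X) :=
  {p | ∃ f : (Fin (p.1 + 1) → X) → X, (⟨p.1, f⟩ : FinOp X) ∈ C ∧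
    ∃ D : Set (Fin (p.1 + 1) → X), D.Finite ∧ p.2 = restrictOp f D}

section Aux

lemma restrictOp_congr {n : ℕ} {f g : (Fin (n + 1) → X) → X} {D : Set (Fin (n + 1) → X)}
    (h : ∀ x ∈ D, g x = f x) : restrictOp f D = restrictOp g D := by
  funext x
  exact Part.ext' Iff.rfl (fun hx _ => (h x hx).symm)

lemma restrictOp_eq_iff {n : ℕ} {f g : (Fin (n + 1) → X) → X} {D D' : Set (Fin (n + 1) → X)}
    (h : restrictOp f D = restrictOp g D') : ∀ x ∈ D, f x = g x := by
  intro x hx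
  have hmem : f x ∈ restrictOp f D x := ⟨hx, rfl⟩
  rw [congrFun h x] at hmem
  obtain ⟨_, hg⟩ := hmem
  exact hg.symm

lemma comp_restrict_eq {n m : ℕ} (f : (Fin (n + 1) → X) → X)
    (g : Fin (n + 1) → (Fin (m + 1) → X) → X) (Df : Set (Fin (n + 1) → X))
    (Dg : Fin (n + 1) → Set (Fin (m + 1) → X)) :
    (fun x => (partPi fun i => restrictOp (g i) (Dg i) x).bind (restrictOp f Df))
      = restrictOp (fun x => f fun i => g i x)
          {x | (∀ i, x ∈ Dg i) ∧ (fun i => g i x) ∈ Df} := by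
  funext x
  refine Part.ext' ?_ ?_
  · exact ⟨fun ⟨h1, h2⟩ => ⟨h1, h2⟩, fun ⟨h1, h2⟩ => ⟨h1, h2⟩⟩
  · intro h1 h2
    rfl

section Top

variable [TopologicalSpace X] [DiscreteTopology X]

lemma isOpen_of_local {n : ℕ} (D : Set (Fin (n + 1) → X)) (hD : D.Finite)
    (T : Set ((Fin (n + 1) → X) → X))
    (hT : ∀ f g : (Fin (n + 1) → X) → X, (∀ x ∈ D, g x = f x) → f ∈ T → g ∈ T) :
    IsOpen T := by
  have hTeq : T = ⋃ f ∈ T, Set.pi D (fun x => {f x}) := by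
    ext g
    simp only [Set.mem_iUnion, Set.mem_pi, Set.mem_singleton_iff]
    exact ⟨fun hg => ⟨g, hg, fun x _ => rfl⟩, fun ⟨f, hf, hgf⟩ => hT f g hgf hf⟩
  rw [hTeq]
  exact isOpen_biUnion fun f _ => isOpen_set_pi hD (fun x _ => isOpen_discrete _)

omit [DiscreteTopology X] in
lemma mem_of_closed_approx {n : ℕ} (S : Set ((Fin (n + 1) → X) → X)) (hS : IsClosed S)
    (f : (Fin (n + 1) → X) → X)
    (h : ∀ D : Set (Fin (n + 1) → X), D.Finite → ∃ g ∈ S, ∀ x ∈ D, g x = f x) : f ∈ S := by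
  rw [← hS.closure_eq, mem_closure_iff]
  intro o ho hfo
  obtain ⟨I, u, hu, hsub⟩ := isOpen_pi_iff.1 ho f hfo
  obtain ⟨g, hgS, hg⟩ := h ↑I I.finite_toSet
  exact ⟨g, hsub fun x hx => (hg x hx) ▸ (hu x hx).2, hgS⟩

end Top

lemma isPartialClone_partRestrictions' {C : Set (FinOp X)} (hC : IsClone C) :
    IsPartialClone (partRestrictions C) := by
  refine ⟨?_, ?_, ?_⟩
  · rintro ⟨n, p⟩ ⟨f, hf, D, hD, hp⟩
    rw [hp]
    exact hD
  · intro n k D hD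
    exact ⟨fun x => x k, hC.1 n k, D, hD, rfl⟩
  · rintro n m f g ⟨f', hf', Df, hDf, hf⟩ hg
    choose g' hg' Dg hDg hgeq using hg
    have hf2 : f = restrictOp f' Df := hf
    have hg2 : ∀ i, g i = restrictOp (g' i) (Dg i) := hgeq
    rw [show (⟨m, fun x => (partPi fun i => g i x).bind f⟩ : PartFinOp X)
        = ⟨m, fun x => (partPi fun i => restrictOp (g' i) (Dg i) x).bind
            (restrictOp f' Df)⟩ by simp only [hf2, hg2], comp_restrict_eq]
    refine ⟨fun x => f' fun i => g' i x, hC.2 n m f' g' hf' hg', _,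
      (hDg 0).subset (fun x hx => hx.1 0), rfl⟩

lemma isPartialClone_finiteDom :
    IsPartialClone {p : PartFinOp X | {x | (p.2 x).Dom}.Finite} := by
  refine ⟨fun p hp => hp, fun n k D hD => hD, fun n m f g hf hg => ?_⟩
  refine Set.Finite.subset (hg 0) (fun x hx => ?_)
  obtain ⟨h1, -⟩ := hx
  exact h1 0

lemma isPartialClone_closure {F : Set (PartFinOp X)}
    (hF : ∀ p ∈ F, {x | (p.2 x).Dom}.Finite) :
    IsPartialClone (partialCloneClosure F) := by
  refine ⟨?_, ?_, ?_⟩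
  · intro p hp
    exact Set.mem_sInter.1 hp _ ⟨isPartialClone_finiteDom, hF⟩
  · intro n k D hD
    exact Set.mem_sInter.2 fun P hP => hP.1.2.1 n k D hD
  · intro n m f g hf hg
    exact Set.mem_sInter.2 fun P hP =>
      hP.1.2.2 n m f g (Set.mem_sInter.1 hf P hP) (fun i => Set.mem_sInter.1 (hg i) P hP)

lemma isLocalClone_cllClosure (F : Set (FinOp X)) : IsLocalClone (cllClosure F) := by
  refine ⟨⟨?_, ?_⟩, ?_⟩
  · intro n k
    exact Set.mem_sInter.2 fun C hC => hC.1.1.1 n k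
  · intro n m f g hf hg
    exact Set.mem_sInter.2 fun C hC =>
      hC.1.1.2 n m f g (Set.mem_sInter.1 hf C hC) (fun i => Set.mem_sInter.1 (hg i) C hC)
  · intro n
    letI : TopologicalSpace X := ⊥
    have heq : {f : (Fin (n + 1) → X) → X | (⟨n, f⟩ : FinOp X) ∈ cllClosure F}
        = ⋂ C ∈ {C : Set (FinOp X) | IsLocalClone C ∧ F ⊆ C},
            {f : (Fin (n + 1) → X) → X | (⟨n, f⟩ : FinOp X) ∈ C} := by
      ext f
      simp [cllClosure]
    rw [heq]
    exact isClosed_biInter fun C hC => hC.1.2 n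

lemma isLocalClone_pullback (Q : Set (PartFinOp X)) (hQ : IsPartialClone Q) :
    IsLocalClone {f : FinOp X | ∀ D : Set (Fin (f.1 + 1) → X), D.Finite →
      (⟨f.1, restrictOp f.2 D⟩ : PartFinOp X) ∈ Q} := by
  refine ⟨⟨?_, ?_⟩, ?_⟩
  · intro n k D hD
    exact hQ.2.1 n k D hD
  · intro n m f g hf hg D hD
    have key := hQ.2.2 n m (restrictOp f ((fun x i => g i x) '' D))
      (fun i => restrictOp (g i) D) (hf _ (hD.image _)) (fun i => hg i D hD)
    have hset : {x | (∀ i : Fin (n + 1), x ∈ D) ∧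
        (fun i => g i x) ∈ (fun x i => g i x) '' D} = D := by
      ext x
      exact ⟨fun hx => hx.1 0, fun hx => ⟨fun _ => hx, ⟨x, hx, rfl⟩⟩⟩
    rw [comp_restrict_eq f g _ (fun _ => D), hset] at key
    exact key
  · intro n
    letI : TopologicalSpace X := ⊥
    haveI : DiscreteTopology X := ⟨rfl⟩
    have heq : {f : (Fin (n + 1) → X) → X | (⟨n, f⟩ : FinOp X) ∈
          {f : FinOp X | ∀ D : Set (Fin (f.1 + 1) → X), D.Finite →
            (⟨f.1, restrictOp f.2 D⟩ : PartFinOp X) ∈ Q}}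
        = ⋂ (D : Set (Fin (n + 1) → X)), ⋂ (_ : D.Finite),
            {f : (Fin (n + 1) → X) → X | (⟨n, restrictOp f D⟩ : PartFinOp X) ∈ Q} := by
      ext f
      simp [Set.mem_iInter]
    rw [heq]
    refine isClosed_iInter fun D => isClosed_iInter fun hD => ?_
    rw [← isOpen_compl_iff]
    refine isOpen_of_local D hD _ ?_
    intro f g hgf hf hgmem
    refine hf (show (⟨n, restrictOp f D⟩ : PartFinOp X) ∈ Q from ?_)
    rw [restrictOp_congr hgf]
    exact hgmem

lemma subset_of_partRestrictions_subset {C C' : Set (FinOp X)} (hC' : IsLocalClone C')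
    (h : partRestrictions C ⊆ partRestrictions C') : C ⊆ C' := by
  rintro ⟨n, f⟩ hf
  letI : TopologicalSpace X := ⊥
  haveI : DiscreteTopology X := ⟨rfl⟩
  refine mem_of_closed_approx {g : (Fin (n + 1) → X) → X | (⟨n, g⟩ : FinOp X) ∈ C'}
    (hC'.2 n) f ?_
  intro D hD
  have hmem : (⟨n, restrictOp f D⟩ : PartFinOp X) ∈ partRestrictions C' :=
    h ⟨f, hf, D, hD, rfl⟩
  obtain ⟨g, hg, D', hD', heq⟩ := hmem
  exact ⟨g, hg, fun x hx => (restrictOp_eq_iff heq x hx).symm⟩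

end Aux

/-- The map sending each local clone on the countably infinite set `X` to the
partial clone of all restrictions of its operations to finite domains is injective and
preserves arbitrary (including infinite) joins. -/
theorem partRestrictions_injective_and_preserves_joins (X : Type) [Countable X] [Infinite X] :
    (∀ C : Set (FinOp X), IsLocalClone C → IsPartialClone (partRestrictions C)) ∧
    Set.InjOn (partRestrictions (X := X)) {C : Set (FinOp X) | IsLocalClone C} ∧
    (∀ 𝒮 : Set (Set (FinOp X)), (∀ C ∈ 𝒮, IsLocalClone C) →
      partRestrictions (cllClosure (⋃₀ 𝒮)) =
        partialCloneClosure (⋃ C ∈ 𝒮, partRestrictions C)) := by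
  refine ⟨fun C hC => isPartialClone_partRestrictions' hC.1, ?_, ?_⟩
  · intro C hC C' hC' h
    exact Set.Subset.antisymm (subset_of_partRestrictions_subset hC' h.le)
      (subset_of_partRestrictions_subset hC h.ge)
  · intro 𝒮 h𝒮
    have hFdom : ∀ p ∈ ⋃ C ∈ 𝒮, partRestrictions C, {x | (p.2 x).Dom}.Finite := by
      intro p hp
      simp only [Set.mem_iUnion] at hp
      obtain ⟨C, hC, f, hf, D, hD, hpD⟩ := hp
      rw [hpD]
      exact hD
    have hQ := isPartialClone_closure hFdom
    apply Set.Subset.antisymm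
    · rintro ⟨n, q⟩ ⟨f, hf, D, hD, hq⟩
      have hq2 : q = restrictOp f D := hq
      rw [show (⟨n, q⟩ : PartFinOp X) = ⟨n, restrictOp f D⟩ by rw [hq2]]
      have hC0 := isLocalClone_pullback (partialCloneClosure (⋃ C ∈ 𝒮, partRestrictions C)) hQ
      have hsub : ⋃₀ 𝒮 ⊆ {g : FinOp X | ∀ D : Set (Fin (g.1 + 1) → X), D.Finite →
          (⟨g.1, restrictOp g.2 D⟩ : PartFinOp X) ∈
            partialCloneClosure (⋃ C ∈ 𝒮, partRestrictions C)} := by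
        rintro g ⟨C, hC, hg⟩ D hD
        exact Set.mem_sInter.2 fun P hP =>
          hP.2 (Set.mem_biUnion hC ⟨g.2, hg, D, hD, rfl⟩)
      exact Set.mem_sInter.1 hf _ ⟨hC0, hsub⟩ D hD
    · refine Set.sInter_subset_of_mem ?_
      refine ⟨isPartialClone_partRestrictions' (isLocalClone_cllClosure _).1, ?_⟩
      intro p hp
      simp only [Set.mem_iUnion] at hp
      obtain ⟨C, hC, f, hf, D, hD, hpD⟩ := hp
      exact ⟨f, Set.mem_sInter.2 fun C' hC' => hC'.2 ⟨C, hC, hf⟩, D, hD, hpD⟩
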